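/- Let H=(V,E,w) be a directed hypergraph and suppose f ∈ ℝ^V has pairwise distinct coordinates. Then the quadratic form Q : ℝ^V → ℝ is (Fréchet) differentiable at f, and for each x ∈ V the partial derivative is ∂Q/∂f_x(f) = Σ_{e∈E : Δ_e(f)>0 and x∈T_e and f_x = max_{u∈T_e} f_u} w_e·Δ_e(f) − Σ_{e∈E : Δ_e(f)>0 and x∈H_e and f_x = min_{v∈H_e} f_v} w_e·Δ_e(f). -/

import Mathlib

open Finset
open scoped Classical

noncomputable section

structure DirHyp (V E : Type) [Fintype V] [Fintype E] where
  Tl : E → Finset V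
  Hd : E → Finset V
  w : E → ℝ
  Tl_ne : ∀ e, (Tl e).Nonempty
  Hd_ne : ∀ e, (Hd e).Nonempty
  w_nonneg : ∀ e, 0 ≤ w e

variable {V E : Type} [Fintype V] [DecidableEq V] [Fintype E]

/-- Discrepancy of edge `e` w.r.t. density `f`. -/
def disc (G : DirHyp V E) (f : V → ℝ) (e : E) : ℝ :=
  (G.Tl e).sup' (G.Tl_ne e) f - (G.Hd e).inf' (G.Hd_ne e) f

/-- Weighted degree of vertex `u`. -/
def vw (G : DirHyp V E) (u : V) : ℝ :=
  ∑ e : E, if u ∈ G.Tl e ∪ G.Hd e then G.w e else 0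

/-- The quadratic form `Q(f) = (1/2) Σ_e w_e ([Δ_e(f)]⁺)²`. -/
def Qform (G : DirHyp V E) (f : V → ℝ) : ℝ :=
  (1 / 2) * ∑ e : E, G.w e * (max (disc G f e) 0) ^ 2

open Filter in
lemma sqMax_hasDerivAt (x : ℝ) :
    HasDerivAt (fun y : ℝ => (max y 0) ^ 2) (2 * max x 0) x := by
  rcases lt_trichotomy x 0 with h | h | h
  · have hev : (fun y : ℝ => (max y 0) ^ 2) =ᶠ[nhds x] fun _ => (0 : ℝ) := by
      filter_upwards [eventually_lt_nhds h] with y hy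
      rw [max_eq_right hy.le]; ring
    have h0 : (2 : ℝ) * max x 0 = 0 := by rw [max_eq_right h.le]; ring
    rw [h0]
    exact (hasDerivAt_const x (0:ℝ)).congr_of_eventuallyEq hev
  · subst h
    rw [hasDerivAt_iff_isLittleO]
    have : (fun y : ℝ => (max y 0) ^ 2) =o[nhds 0] fun y => y := by
      rw [Asymptotics.isLittleO_iff]
      intro c hc
      filter_upwards [Metric.eventually_nhds_iff.2 ⟨c, hc, fun {y} hy => hy⟩] with y hy
      have hy' : |y| < c := by simpa [Real.dist_eq] using hy
      have h1 : (max y 0) ^ 2 ≤ y ^ 2 := by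
        rcases le_or_gt y 0 with h' | h'
        · rw [max_eq_right h']; simpa using sq_nonneg y
        · rw [max_eq_left h'.le]
      have : ‖(max y 0) ^ 2‖ = (max y 0)^2 := by
        rw [Real.norm_eq_abs, abs_of_nonneg (sq_nonneg _)]
      rw [this, Real.norm_eq_abs]
      nlinarith [sq_abs y, abs_nonneg y]
    simpa using this
  · have hev : (fun y : ℝ => (max y 0) ^ 2) =ᶠ[nhds x] fun y => y ^ 2 := by
      filter_upwards [eventually_gt_nhds h] with y hy
      rw [max_eq_left hy.le]
    have := (hasDerivAt_pow 2 x).congr_of_eventuallyEq hev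
    refine this.congr_deriv ?_
    rw [max_eq_left h.le]; push_cast; ring

/-- if `f` has pairwise distinct coordinates then `Q` is Fréchet
differentiable at `f`, with the stated partial derivatives. -/
theorem Q_differentiable_of_injective (G : DirHyp V E) (f : V → ℝ)
    (hf : Function.Injective f) :
    ∃ L : (V → ℝ) →L[ℝ] ℝ, HasFDerivAt (Qform G) L f ∧
      ∀ x : V, L (Pi.single x 1) =
        (∑ e ∈ Finset.univ.filter
            (fun e : E => 0 < disc G f e ∧ x ∈ G.Tl e ∧
              f x = (G.Tl e).sup' (G.Tl_ne e) f),
          G.w e * disc G f e)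
        - (∑ e ∈ Finset.univ.filter
            (fun e : E => 0 < disc G f e ∧ x ∈ G.Hd e ∧
              f x = (G.Hd e).inf' (G.Hd_ne e) f),
          G.w e * disc G f e) := by
  classical
  choose u hu hfu using fun e => Finset.exists_mem_eq_sup' (G.Tl_ne e) f
  choose v hv hfv using fun e => Finset.exists_mem_eq_inf' (G.Hd_ne e) f
  have hdisc : ∀ e, disc G f e = f (u e) - f (v e) := fun e => by
    rw [disc, hfu e, hfv e]
  set L : (V → ℝ) →L[ℝ] ℝ :=
    (1/2 : ℝ) • ∑ e : E, G.w e • ((2 * max (disc G f e) 0) •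
      ((ContinuousLinearMap.proj (u e) : (V → ℝ) →L[ℝ] ℝ) -
        ContinuousLinearMap.proj (v e))) with hL
  have hterm : ∀ e : E, HasFDerivAt
      (fun g : V → ℝ => G.w e * (max (g (u e) - g (v e)) 0) ^ 2)
      (G.w e • ((2 * max (disc G f e) 0) •
        ((ContinuousLinearMap.proj (u e) : (V → ℝ) →L[ℝ] ℝ) -
          ContinuousLinearMap.proj (v e)))) f := by
    intro e
    have h1 : HasFDerivAt (fun g : V → ℝ => g (u e) - g (v e))
        ((ContinuousLinearMap.proj (u e) : (V → ℝ) →L[ℝ] ℝ) -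
          ContinuousLinearMap.proj (v e)) f :=
      ((ContinuousLinearMap.proj (u e) : (V → ℝ) →L[ℝ] ℝ).hasFDerivAt).sub
        ((ContinuousLinearMap.proj (v e) : (V → ℝ) →L[ℝ] ℝ).hasFDerivAt)
    have h2 := (sqMax_hasDerivAt (f (u e) - f (v e))).comp_hasFDerivAt f h1
    have h3 := h2.const_mul (G.w e)
    rw [hdisc e]
    exact h3
  have hsum := HasFDerivAt.fun_sum (fun e (_ : e ∈ Finset.univ) => hterm e)
  have hF : HasFDerivAt
      (fun g : V → ℝ => (1/2 : ℝ) * ∑ e : E, G.w e * (max (g (u e) - g (v e)) 0) ^ 2)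
      L f := by
    rw [hL]
    exact hsum.const_mul (1/2 : ℝ)
  -- eventual equality of Qform and the simplified local form
  have hevT : ∀ᶠ g in nhds f, ∀ e : E, ∀ a ∈ G.Tl e, g a ≤ g (u e) := by
    rw [Filter.eventually_all]
    intro e
    rw [Filter.eventually_all]
    intro a
    by_cases ha : a ∈ G.Tl e
    · by_cases hau : a = u e
      · exact Filter.Eventually.of_forall fun g _ => by rw [hau]
      · have hlt : f a < f (u e) := by
          have hle : f a ≤ f (u e) := by rw [← hfu e]; exact Finset.le_sup' f ha
          exact lt_of_le_of_ne hle (fun hcontr => hau (hf hcontr))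
        have hop : IsOpen {g : V → ℝ | g a < g (u e)} :=
          isOpen_lt (continuous_apply a) (continuous_apply (u e))
        filter_upwards [hop.mem_nhds hlt] with g hg _
        exact hg.le
    · exact Filter.Eventually.of_forall fun g h => absurd h ha
  have hevH : ∀ᶠ g in nhds f, ∀ e : E, ∀ a ∈ G.Hd e, g (v e) ≤ g a := by
    rw [Filter.eventually_all]
    intro e
    rw [Filter.eventually_all]
    intro a
    by_cases ha : a ∈ G.Hd e
    · by_cases hav : a = v e
      · exact Filter.Eventually.of_forall fun g _ => by rw [hav]
      · have hlt : f (v e) < f a := by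
          have hle : f (v e) ≤ f a := by rw [← hfv e]; exact Finset.inf'_le f ha
          exact lt_of_le_of_ne hle (fun hcontr => hav (hf hcontr).symm)
        have hop : IsOpen {g : V → ℝ | g (v e) < g a} :=
          isOpen_lt (continuous_apply (v e)) (continuous_apply a)
        filter_upwards [hop.mem_nhds hlt] with g hg _
        exact hg.le
    · exact Filter.Eventually.of_forall fun g h => absurd h ha
  have hev : Qform G =ᶠ[nhds f]
      fun g : V → ℝ => (1/2 : ℝ) * ∑ e : E, G.w e * (max (g (u e) - g (v e)) 0) ^ 2 := by
    filter_upwards [hevT, hevH] with g hT hH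
    rw [Qform]
    refine congrArg _ (Finset.sum_congr rfl fun e _ => ?_)
    have hsu : (G.Tl e).sup' (G.Tl_ne e) g = g (u e) :=
      le_antisymm (Finset.sup'_le _ _ (hT e)) (Finset.le_sup' g (hu e))
    have hin : (G.Hd e).inf' (G.Hd_ne e) g = g (v e) :=
      le_antisymm (Finset.inf'_le g (hv e)) (Finset.le_inf' _ _ (hH e))
    rw [disc, hsu, hin]
  refine ⟨L, hF.congr_of_eventuallyEq hev, fun x => ?_⟩
  have hLapp : L (Pi.single x 1) = (1/2 : ℝ) * ∑ e : E,
      G.w e * ((2 * max (disc G f e) 0) *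
        ((Pi.single x 1 : V → ℝ) (u e) - (Pi.single x 1 : V → ℝ) (v e))) := by
    rw [hL]
    simp [ContinuousLinearMap.sum_apply, smul_eq_mul, mul_assoc]
  rw [hLapp]
  have hstep : (1/2 : ℝ) * ∑ e : E,
      G.w e * ((2 * max (disc G f e) 0) *
        ((Pi.single x 1 : V → ℝ) (u e) - (Pi.single x 1 : V → ℝ) (v e)))
      = ∑ e : E, ((if u e = x then G.w e * max (disc G f e) 0 else 0)
          - (if v e = x then G.w e * max (disc G f e) 0 else 0)) := by
    rw [Finset.mul_sum]
    refine Finset.sum_congr rfl fun e _ => ?_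
    rw [Pi.single_apply, Pi.single_apply]
    by_cases h1 : u e = x <;> by_cases h2 : v e = x <;> simp [h1, h2] <;> ring
  rw [hstep, Finset.sum_sub_distrib]
  congr 1
  · rw [Finset.sum_filter]
    refine Finset.sum_congr rfl fun e _ => ?_
    by_cases hx : u e = x
    · by_cases hd : 0 < disc G f e
      · have hc : 0 < disc G f e ∧ x ∈ G.Tl e ∧ f x = (G.Tl e).sup' (G.Tl_ne e) f :=
          ⟨hd, hx ▸ hu e, by rw [← hx, hfu e]⟩
        rw [if_pos hx, if_pos hc, max_eq_left hd.le]
      · have hc : ¬(0 < disc G f e ∧ x ∈ G.Tl e ∧ f x = (G.Tl e).sup' (G.Tl_ne e) f) :=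
          fun h => hd h.1
        rw [if_pos hx, if_neg hc, max_eq_right (not_lt.1 hd), mul_zero]
    · have hc : ¬(0 < disc G f e ∧ x ∈ G.Tl e ∧ f x = (G.Tl e).sup' (G.Tl_ne e) f) := by
        rintro ⟨-, -, hfx⟩
        exact hx (hf (by rw [hfx]; exact hfu e)).symm
      rw [if_neg hx, if_neg hc]
  · rw [Finset.sum_filter]
    refine Finset.sum_congr rfl fun e _ => ?_
    by_cases hx : v e = x
    · by_cases hd : 0 < disc G f e
      · have hc : 0 < disc G f e ∧ x ∈ G.Hd e ∧ f x = (G.Hd e).inf' (G.Hd_ne e) f :=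
          ⟨hd, hx ▸ hv e, by rw [← hx, hfv e]⟩
        rw [if_pos hx, if_pos hc, max_eq_left hd.le]
      · have hc : ¬(0 < disc G f e ∧ x ∈ G.Hd e ∧ f x = (G.Hd e).inf' (G.Hd_ne e) f) :=
          fun h => hd h.1
        rw [if_pos hx, if_neg hc, max_eq_right (not_lt.1 hd), mul_zero]
    · have hc : ¬(0 < disc G f e ∧ x ∈ G.Hd e ∧ f x = (G.Hd e).inf' (G.Hd_ne e) f) := by
        rintro ⟨-, -, hfx⟩
        exact hx (hf (by rw [hfx]; exact hfv e)).symm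
      rw [if_neg hx, if_neg hc]
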